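/- arXiv:0706.3250 — 6 statements merged into one kernel-verified Lean document; each statement's English description precedes it below -/
import Mathlib

section
/- Let m ≥ 1 and let a_1 = 1 < a_2 < ... < a_m be integers with a_i ≤ 3·a_{i-1} for 2 ≤ i ≤ m. Set a_{m+i} = 2a_m − a_{m−i} for 1 ≤ i ≤ m−1 and a_{2m} = 2a_m, and let M = a_{2m} = 2a_m. Then for every 1 ≤ r ≤ m−1 and every nonnegative integer n with ⌊n/M⌋ ≤ r and n − ⌊n/M⌋·M < a_{r+1}, the integer n can be written as a sum of at most 2r elements of {a_1, ..., a_{2m}} with repetition allowed. -/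
/-- `n` can be written as a sum of at most `t` elements of `A`, with repetition. -/
def CanRep (A : Finset ℕ) (t n : ℕ) : Prop :=
  ∃ l : Multiset ℕ, (∀ x ∈ l, x ∈ A) ∧ Multiset.card l ≤ t ∧ l.sum = n

lemma canRep_mono {A : Finset ℕ} {t t' n : ℕ} (h : CanRep A t n) (htt : t ≤ t') :
    CanRep A t' n := by
  obtain ⟨l, h1, h2, h3⟩ := h
  exact ⟨l, h1, h2.trans htt, h3⟩

lemma canRep_cons {A : Finset ℕ} {t n x : ℕ} (hx : x ∈ A) (h : CanRep A t n) :
    CanRep A (t + 1) (x + n) := by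
  obtain ⟨l, h1, h2, h3⟩ := h
  refine ⟨x ::ₘ l, ?_, ?_, ?_⟩
  · intro y hy
    rcases Multiset.mem_cons.mp hy with h | h
    · subst h; exact hx
    · exact h1 y h
  · simpa using Nat.add_le_add_right h2 1
  · simp [h3]

lemma canRep_addmul {A : Finset ℕ} (x d : ℕ) {t n : ℕ} (hx : x ∈ A) (h : CanRep A t n) :
    CanRep A (t + d) (d * x + n) := by
  induction d with
  | zero => simpa using h
  | succ k ihk =>
    have h' := canRep_cons hx ihk
    have e1 : t + (k + 1) = t + k + 1 := by omega
    have e2 : (k + 1) * x + n = x + (k * x + n) := by ring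
    rw [e1, e2]
    exact h'

theorem stmt_1 (m : ℕ) (hm : 1 ≤ m) (a : ℕ → ℕ)
    (ha1 : a 1 = 1)
    (hmono : ∀ i, 2 ≤ i → i ≤ m → a (i - 1) < a i)
    (h3 : ∀ i, 2 ≤ i → i ≤ m → a i ≤ 3 * a (i - 1))
    (hsym : ∀ i, 1 ≤ i → i ≤ m - 1 → a (m + i) = 2 * a m - a (m - i))
    (h2m : a (2 * m) = 2 * a m) :
    ∀ r, 1 ≤ r → r ≤ m - 1 →
      ∀ n : ℕ, n / (2 * a m) ≤ r → n % (2 * a m) < a (r + 1) →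
        CanRep ((Finset.Icc 1 (2 * m)).image a) (2 * r) n := by
  set A := (Finset.Icc 1 (2 * m)).image a with hA
  have hmem : ∀ j, 1 ≤ j → j ≤ 2 * m → a j ∈ A := by
    intro j h1 h2
    exact Finset.mem_image.mpr ⟨j, Finset.mem_Icc.mpr ⟨h1, h2⟩, rfl⟩
  have hle : ∀ j, j ≤ m → ∀ i, 1 ≤ i → i ≤ j → a i ≤ a j := by
    intro j
    induction j with
    | zero => intro _ i h1 h2; omega
    | succ k ihk =>
      intro hjm i h1 h2
      rcases Nat.eq_or_lt_of_le h2 with h | h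
      · rw [h]
      · have hik : i ≤ k := by omega
        have h1k : a i ≤ a k := ihk (by omega) i h1 hik
        have h2k : a k < a (k + 1) := by
          have := hmono (k + 1) (by omega) hjm
          simpa using this
        omega
  have key : ∀ r, r ≤ m - 1 → ∀ n : ℕ, n / (2 * a m) ≤ r →
      n % (2 * a m) < a (r + 1) → CanRep A (2 * r) n := by
    intro r
    induction r with
    | zero =>
      intro _ n hdiv hmod
      rw [ha1] at hmod
      have hdm := Nat.div_add_mod n (2 * a m)
      have hn0 : n = 0 := by
        rcases Nat.eq_zero_or_pos (2 * a m) with h | h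
        · simp [h] at hmod; omega
        · have h0 : n / (2 * a m) = 0 := Nat.le_zero.mp hdiv
          rw [h0] at hdm
          omega
      exact ⟨0, by simp, by simp, by simp [hn0]⟩
    | succ r ih =>
      intro hrm n hdiv hmod
      have hr2m : r + 2 ≤ m := by omega
      have ham1 : 1 ≤ a m := by
        calc 1 = a 1 := ha1.symm
        _ ≤ a m := hle m le_rfl 1 le_rfl hm
      have haR1 : 1 ≤ a (r + 1) := by
        calc 1 = a 1 := ha1.symm
        _ ≤ a (r + 1) := hle (r + 1) (by omega) 1 le_rfl (by omega)
      have haRm : a (r + 1) ≤ a m := hle m le_rfl (r + 1) (by omega) (by omega)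
      have haR2m : a (r + 2) ≤ a m := hle m le_rfl (r + 2) (by omega) (by omega)
      have h3' : a (r + 2) ≤ 3 * a (r + 1) := by
        have := h3 (r + 2) (by omega) (by omega)
        simpa using this
      set M := 2 * a m with hM
      have hMpos : 0 < M := by omega
      have hn := Nat.div_add_mod n M
      set q := n / M with hq_def
      set s := n % M with hs_def
      have hmod' : s < a (r + 2) := hmod
      have hs := Nat.div_add_mod s (a (r + 1))
      set d := s / a (r + 1) with hd_def
      set s' := s % a (r + 1) with hs'_def
      have hd2 : d < 3 := Nat.div_lt_of_lt_mul (by omega)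
      have hs'lt : s' < a (r + 1) := Nat.mod_lt _ (by omega)
      have hs'M : s' < M := by omega
      have hMA : M ∈ A := by
        have h := hmem (2 * m) (by omega) le_rfl
        rwa [h2m] at h
      have hR1A : a (r + 1) ∈ A := hmem (r + 1) (by omega) (by omega)
      have hdivmod : ∀ p : ℕ, p < M → (M * p / M = p → True) := by intro p _ _; trivial
      by_cases hq : q ≤ r
      · -- case q ≤ r
        have h1 : (M * q + s') / M = q := by
          rw [Nat.mul_add_div hMpos, Nat.div_eq_of_lt hs'M, Nat.add_zero]
        have h2 : (M * q + s') % M = s' := by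
          rw [Nat.mul_add_mod, Nat.mod_eq_of_lt hs'M]
        have hrep := ih (by omega) (M * q + s') (by rw [h1]; exact hq)
          (by rw [h2]; exact hs'lt)
        have hrep2 := canRep_addmul (a (r + 1)) d hR1A hrep
        have heq : d * a (r + 1) + (M * q + s') = n := by rw [← hn, ← hs]; ring
        rw [heq] at hrep2
        exact canRep_mono hrep2 (by omega)
      · have hq' : q = r + 1 := by omega
        have h1 : (M * r + s') / M = r := by
          rw [Nat.mul_add_div hMpos, Nat.div_eq_of_lt hs'M, Nat.add_zero]
        have h2 : (M * r + s') % M = s' := by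
          rw [Nat.mul_add_mod, Nat.mod_eq_of_lt hs'M]
        by_cases hd : d ≤ 1
        · have hrep := ih (by omega) (M * r + s') (by rw [h1]) (by rw [h2]; exact hs'lt)
          have hrep2 := canRep_cons hMA hrep
          have hrep3 := canRep_addmul (a (r + 1)) d hR1A hrep2
          have heq : d * a (r + 1) + (M + (M * r + s')) = n := by
            rw [← hn, hq', ← hs]; ring
          rw [heq] at hrep3
          exact canRep_mono hrep3 (by omega)
        · have hd2' : d = 2 := by omega
          have hsum : a (r + 1) * 2 + s' = s := by rw [← hd2']; exact hs
          set u := 3 * a (r + 1) + s' - a (r + 2) with hu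
          have hu_eq : u + a (r + 2) = 3 * a (r + 1) + s' := by omega
          have hu_lt : u < a (r + 1) := by omega
          have huM : u < M := by omega
          have h1u : (M * r + u) / M = r := by
            rw [Nat.mul_add_div hMpos, Nat.div_eq_of_lt huM, Nat.add_zero]
          have h2u : (M * r + u) % M = u := by
            rw [Nat.mul_add_mod, Nat.mod_eq_of_lt huM]
          have hrep := ih (by omega) (M * r + u) (by rw [h1u]) (by rw [h2u]; exact hu_lt)
          have hR2A : a (r + 2) ∈ A := hmem (r + 2) (by omega) (by omega)
          have hrep2 := canRep_cons hR2A hrep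
          have hbA : (2 * a m - a (r + 1)) ∈ A := by
            have hi : m - (m - (r + 1)) = r + 1 := by omega
            have hsy := hsym (m - (r + 1)) (by omega) (by omega)
            rw [hi] at hsy
            have hmm := hmem (m + (m - (r + 1))) (by omega) (by omega)
            rwa [hsy] at hmm
          have hrep3 := canRep_cons hbA hrep2
          have heq : 2 * a m - a (r + 1) + (a (r + 2) + (M * r + u)) = n := by
            have hn2 : n = M * r + (M + s) := by rw [← hn, hq']; ring
            have hMe : M = 2 * a m := hM
            generalize M * r = X at hn2 ⊢
            omega
          rw [heq] at hrep3
          exact canRep_mono hrep3 (by omega)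
  intro r hr1 hrm n hdiv hmod
  exact key r hrm n hdiv hmod
end

section
/- Let m ≥ 1 and let A = {1 = a_1 < a_2 < ... < a_{2m}} be a symmetric base of even size with a_i ≤ 3·a_{i-1} for all 2 ≤ i ≤ m. Then A is compact: every integer n with 0 ≤ n ≤ 2m·a_{2m} = 4m·a_m can be written as a sum of at most 2m elements of A, with repetition allowed. -/
namespace Stmt2Aux

variable {m : ℕ} {a : ℕ → ℕ}

lemma amono (hmono : ∀ i, 2 ≤ i → i ≤ m → a (i - 1) < a i) :
    ∀ j, j ≤ m → ∀ i, 1 ≤ i → i ≤ j → a i ≤ a j := by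
  intro j
  induction j with
  | zero => intro _ i h1 h2; omega
  | succ j ih =>
    intro hjm i h1 h2
    rcases Nat.lt_or_ge i (j + 1) with h | h
    · have h1' : a i ≤ a j := ih (by omega) i h1 (by omega)
      have h2' : a j < a (j + 1) := by
        have := hmono (j + 1) (by omega) hjm
        simpa using this
      omega
    · have : i = j + 1 := by omega
      subst this; exact le_rfl

lemma hmem (s : ℕ) (h1 : 1 ≤ s) (h2 : s ≤ m) : a s ∈ (Finset.Icc 1 m).image a :=
  Finset.mem_image_of_mem a (Finset.mem_Icc.mpr ⟨h1, h2⟩)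

/-- Signed representation: `r ≤ a k` can be written as `P.sum - N.sum`
with at most `k` terms total and fewer than `k` negatives. -/
lemma sc (ha1 : a 1 = 1)
    (hmono : ∀ i, 2 ≤ i → i ≤ m → a (i - 1) < a i)
    (h3 : ∀ i, 2 ≤ i → i ≤ m → a i ≤ 3 * a (i - 1)) :
    ∀ k, 1 ≤ k → k ≤ m → ∀ r, r ≤ a k →
      ∃ P N : Multiset ℕ, (∀ x ∈ P, x ∈ (Finset.Icc 1 m).image a) ∧
        (∀ x ∈ N, x ∈ (Finset.Icc 1 m).image a) ∧
        Multiset.card P + Multiset.card N ≤ k ∧ Multiset.card N < k ∧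
        P.sum = r + N.sum := by
  intro k
  induction k with
  | zero => intro h; omega
  | succ k ih =>
    intro _ hkm r hr
    by_cases hk : k = 0
    · subst hk
      rw [ha1] at hr
      interval_cases r
      · exact ⟨0, 0, by simp, by simp, by simp, by simp, by simp⟩
      · exact ⟨{1}, 0, by
          intro x hx
          simp only [Multiset.mem_singleton] at hx
          subst hx
          simpa [ha1] using hmem (m := m) (a := a) 1 le_rfl (by omega),
          by simp, by simp, by simp, by simp⟩
    · have hk1 : 1 ≤ k := by omega
      have hgap : a (k + 1) ≤ 3 * a k := by
        have := h3 (k + 1) (by omega) hkm; simpa using this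
      have hlt : a k < a (k + 1) := by
        have := hmono (k + 1) (by omega) hkm; simpa using this
      rcases le_or_gt r (a k) with h | h
      · obtain ⟨P, N, hP, hN, hc, hcn, hs⟩ := ih hk1 (by omega) r h
        exact ⟨P, N, hP, hN, by omega, by omega, hs⟩
      · rcases le_or_gt r (2 * a k) with h2 | h2
        · obtain ⟨P, N, hP, hN, hc, hcn, hs⟩ := ih hk1 (by omega) (r - a k) (by omega)
          refine ⟨a k ::ₘ P, N, ?_, hN, ?_, by omega, ?_⟩
          · intro x hx
            rcases Multiset.mem_cons.mp hx with rfl | hx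
            · exact hmem k hk1 (by omega)
            · exact hP x hx
          · simp only [Multiset.card_cons]; omega
          · simp only [Multiset.sum_cons]; omega
        · have hy : a (k + 1) - r ≤ a k := by omega
          obtain ⟨P, N, hP, hN, hc, hcn, hs⟩ := ih hk1 (by omega) (a (k + 1) - r) hy
          refine ⟨a (k + 1) ::ₘ N, P, ?_, hP, ?_, by omega, ?_⟩
          · intro x hx
            rcases Multiset.mem_cons.mp hx with rfl | hx
            · exact hmem (k + 1) (by omega) hkm
            · exact hN x hx
          · simp only [Multiset.card_cons]; omega
          · simp only [Multiset.sum_cons]; omega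

/-- Budgeted representation: at most `q` negatives, total `≤ k + (k - 1 - q)`. -/
lemma pk (ha1 : a 1 = 1)
    (hmono : ∀ i, 2 ≤ i → i ≤ m → a (i - 1) < a i)
    (h3 : ∀ i, 2 ≤ i → i ≤ m → a i ≤ 3 * a (i - 1)) (q : ℕ) :
    ∀ k, 1 ≤ k → k ≤ m → ∀ r, r ≤ a k →
      ∃ P N : Multiset ℕ, (∀ x ∈ P, x ∈ (Finset.Icc 1 m).image a) ∧
        (∀ x ∈ N, x ∈ (Finset.Icc 1 m).image a) ∧
        Multiset.card N ≤ q ∧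
        Multiset.card P + Multiset.card N ≤ k + (k - 1 - q) ∧
        P.sum = r + N.sum := by
  intro k
  induction k with
  | zero => intro h; omega
  | succ k ih =>
    intro _ hkm r hr
    by_cases hq : k ≤ q
    · obtain ⟨P, N, hP, hN, hc, hcn, hs⟩ := sc ha1 hmono h3 (k + 1) (by omega) hkm r hr
      exact ⟨P, N, hP, hN, by omega, by omega, hs⟩
    · have hk1 : 1 ≤ k := by omega
      have hgap : a (k + 1) ≤ 3 * a k := by
        have := h3 (k + 1) (by omega) hkm; simpa using this
      have hlt : a k < a (k + 1) := by
        have := hmono (k + 1) (by omega) hkm; simpa using this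
      rcases le_or_gt r (a k) with h | h
      · obtain ⟨P, N, hP, hN, hq', hc, hs⟩ := ih hk1 (by omega) r h
        exact ⟨P, N, hP, hN, hq', by omega, hs⟩
      · rcases le_or_gt r (2 * a k) with h2 | h2
        · obtain ⟨P, N, hP, hN, hq', hc, hs⟩ := ih hk1 (by omega) (r - a k) (by omega)
          refine ⟨a k ::ₘ P, N, ?_, hN, hq', ?_, ?_⟩
          · intro x hx
            rcases Multiset.mem_cons.mp hx with rfl | hx
            · exact hmem k hk1 (by omega)
            · exact hP x hx
          · simp only [Multiset.card_cons]; omega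
          · simp only [Multiset.sum_cons]; omega
        · obtain ⟨P, N, hP, hN, hq', hc, hs⟩ := ih hk1 (by omega) (r - 2 * a k) (by omega)
          refine ⟨a k ::ₘ a k ::ₘ P, N, ?_, hN, hq', ?_, ?_⟩
          · intro x hx
            rcases Multiset.mem_cons.mp hx with rfl | hx
            · exact hmem k hk1 (by omega)
            rcases Multiset.mem_cons.mp hx with rfl | hx
            · exact hmem k hk1 (by omega)
            · exact hP x hx
          · simp only [Multiset.card_cons]; omega
          · simp only [Multiset.sum_cons]; omega

lemma map_sub_sum (C : ℕ) : ∀ N : Multiset ℕ, (∀ x ∈ N, x ≤ C) →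
    (Multiset.map (fun x => C - x) N).sum + N.sum = Multiset.card N * C := by
  intro N
  induction N using Multiset.induction with
  | empty => simp
  | cons x s ih =>
    intro h
    have hx : x ≤ C := h x (Multiset.mem_cons_self x s)
    have ihs := ih (fun y hy => h y (Multiset.mem_cons_of_mem hy))
    simp only [Multiset.map_cons, Multiset.sum_cons, Multiset.card_cons, Nat.add_mul, one_mul]
    omega

end Stmt2Aux

theorem stmt_2 (m : ℕ) (hm : 1 ≤ m) (a : ℕ → ℕ)
    (ha1 : a 1 = 1)
    (hmono : ∀ i, 2 ≤ i → i ≤ m → a (i - 1) < a i)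
    (h3 : ∀ i, 2 ≤ i → i ≤ m → a i ≤ 3 * a (i - 1))
    (hsym : ∀ i, 1 ≤ i → i ≤ m - 1 → a (m + i) = 2 * a m - a (m - i))
    (h2m : a (2 * m) = 2 * a m) :
    ∀ n ≤ 2 * m * a (2 * m), CanRep ((Finset.Icc 1 (2 * m)).image a) (2 * m) n := by
  -- abbreviations
  have ham : 1 ≤ a m := by
    have := Stmt2Aux.amono hmono m le_rfl 1 le_rfl hm
    omega
  -- lower-half elements and their reflections
  have hLx : ∀ x ∈ (Finset.Icc 1 m).image a, x ∈ (Finset.Icc 1 (2 * m)).image a ∧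
      x ≤ 2 * a m ∧ (2 * a m - x) ∈ (Finset.Icc 1 (2 * m)).image a := by
    intro x hx
    obtain ⟨s, hsmem, rfl⟩ := Finset.mem_image.mp hx
    obtain ⟨hs1, hs2⟩ := Finset.mem_Icc.mp hsmem
    have hle : a s ≤ a m := Stmt2Aux.amono hmono m le_rfl s hs1 hs2
    refine ⟨Finset.mem_image_of_mem a (Finset.mem_Icc.mpr ⟨hs1, by omega⟩), by omega, ?_⟩
    by_cases hsm : s = m
    · subst hsm
      have h' : 2 * a s - a s = a s := by omega
      rw [h']
      exact Finset.mem_image_of_mem a (Finset.mem_Icc.mpr ⟨hs1, by omega⟩)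
    · have hi := hsym (m - s) (by omega) (by omega)
      have hms : m - (m - s) = s := by omega
      rw [hms] at hi
      rw [← hi]
      exact Finset.mem_image_of_mem a (Finset.mem_Icc.mpr ⟨by omega, by omega⟩)
  have ha2m_mem : a (2 * m) ∈ (Finset.Icc 1 (2 * m)).image a :=
    Finset.mem_image_of_mem a (Finset.mem_Icc.mpr ⟨by omega, le_rfl⟩)
  -- the low half : every n ≤ m * (2 a m) is representable
  have hlow : ∀ n, n ≤ m * (2 * a m) → CanRep ((Finset.Icc 1 (2 * m)).image a) (2 * m) n := by
    intro n hn
    rcases Nat.eq_zero_or_pos n with rfl | hn0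
    · exact ⟨0, by simp, by simp, by simp⟩
    have hCpos : 0 < 2 * a m := by omega
    set q := (n - 1) / (2 * a m) with hqdef
    have hlowb : q * (2 * a m) ≤ n - 1 := Nat.div_mul_le_self (n - 1) (2 * a m)
    have hdiv : n - 1 < (q + 1) * (2 * a m) :=
      (Nat.div_lt_iff_lt_mul hCpos).mp (Nat.lt_succ_self q)
    have hql : q + 1 ≤ m := by
      have h1 : (n - 1) / (2 * a m) < m := (Nat.div_lt_iff_lt_mul hCpos).mpr (by omega)
      omega
    obtain ⟨A3, hA3⟩ : ∃ x, x = q * (2 * a m) := ⟨_, rfl⟩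
    rw [← hA3] at hlowb
    have hstep : (q + 1) * (2 * a m) = A3 + 2 * a m := by rw [hA3]; ring
    rw [hstep] at hdiv
    set r := n - A3 with hrdef
    have hr1 : 1 ≤ r := by omega
    have hr2 : r ≤ 2 * a m := by omega
    have hPN : ∃ P N : Multiset ℕ, (∀ x ∈ P, x ∈ (Finset.Icc 1 m).image a) ∧
        (∀ x ∈ N, x ∈ (Finset.Icc 1 m).image a) ∧
        Multiset.card N ≤ q ∧
        Multiset.card P + Multiset.card N ≤ m + 1 + (m - 1 - q) ∧
        P.sum = r + N.sum := by
      rcases le_or_gt r (a m) with h | h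
      · obtain ⟨P, N, hP, hN, hq', hc, hs⟩ := Stmt2Aux.pk ha1 hmono h3 q m hm le_rfl r h
        exact ⟨P, N, hP, hN, hq', by omega, hs⟩
      · obtain ⟨P, N, hP, hN, hq', hc, hs⟩ :=
          Stmt2Aux.pk ha1 hmono h3 q m hm le_rfl (r - a m) (by omega)
        refine ⟨a m ::ₘ P, N, ?_, hN, hq', ?_, ?_⟩
        · intro x hx
          rcases Multiset.mem_cons.mp hx with rfl | hx
          · exact Stmt2Aux.hmem m hm le_rfl
          · exact hP x hx
        · simp only [Multiset.card_cons]; omega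
        · simp only [Multiset.sum_cons]; omega
    obtain ⟨P, N, hP, hN, hNq, hc, hs⟩ := hPN
    refine ⟨P + Multiset.map (fun x => 2 * a m - x) N +
        Multiset.replicate (q - Multiset.card N) (a (2 * m)), ?_, ?_, ?_⟩
    · intro x hx
      simp only [Multiset.mem_add] at hx
      rcases hx with (hx | hx) | hx
      · exact (hLx x (hP x hx)).1
      · obtain ⟨y, hy, rfl⟩ := Multiset.mem_map.mp hx
        exact (hLx y (hN y hy)).2.2
      · rw [Multiset.eq_of_mem_replicate hx]
        exact ha2m_mem
    · simp only [Multiset.card_add, Multiset.card_map, Multiset.card_replicate]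
      omega
    · have hmap : (Multiset.map (fun x => 2 * a m - x) N).sum + N.sum =
          Multiset.card N * (2 * a m) :=
        Stmt2Aux.map_sub_sum _ N (fun x hx => (hLx x (hN x hx)).2.1)
      have hrep : (Multiset.replicate (q - Multiset.card N) (a (2 * m))).sum =
          (q - Multiset.card N) * (2 * a m) := by
        rw [Multiset.sum_replicate, h2m, smul_eq_mul]
      have hjoin : Multiset.card N * (2 * a m) + (q - Multiset.card N) * (2 * a m) = A3 := by
        rw [← Nat.add_mul, hA3]
        congr 1
        omega
      obtain ⟨K1, hK1⟩ : ∃ x, x = Multiset.card N * (2 * a m) := ⟨_, rfl⟩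
      obtain ⟨K2, hK2⟩ : ∃ x, x = (q - Multiset.card N) * (2 * a m) := ⟨_, rfl⟩
      rw [← hK1] at hmap hjoin
      rw [← hK2] at hrep hjoin
      simp only [Multiset.sum_add, hrep]
      omega
  -- final assembly using symmetry
  intro n hn
  rw [h2m] at hn
  obtain ⟨B, hB⟩ : ∃ x, x = m * (2 * a m) := ⟨_, rfl⟩
  have hBB : 2 * m * (2 * a m) = B + B := by rw [hB]; ring
  rw [hBB] at hn
  rcases le_or_gt n B with h | h
  · exact hlow n (hB ▸ h)
  · -- reflect
    have hfull : ∀ x ∈ (Finset.Icc 1 (2 * m)).image a, x ≤ 2 * a m ∧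
        (¬ x = a (2 * m) → (2 * a m - x) ∈ (Finset.Icc 1 (2 * m)).image a) := by
      intro x hx
      obtain ⟨s, hsmem, rfl⟩ := Finset.mem_image.mp hx
      obtain ⟨hs1, hs2⟩ := Finset.mem_Icc.mp hsmem
      by_cases hsl : s ≤ m
      · have h' := hLx (a s) (Finset.mem_image_of_mem a (Finset.mem_Icc.mpr ⟨hs1, hsl⟩))
        exact ⟨h'.2.1, fun _ => h'.2.2⟩
      · by_cases hse : s = 2 * m
        · subst hse
          exact ⟨by rw [h2m], fun hne => absurd rfl hne⟩
        · have hi := hsym (s - m) (by omega) (by omega)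
          have hms : m + (s - m) = s := by omega
          rw [hms] at hi
          have hle : a (m - (s - m)) ≤ a m :=
            Stmt2Aux.amono hmono m le_rfl _ (by omega) (by omega)
          have hxle : a s ≤ 2 * a m := by omega
          refine ⟨hxle, fun _ => ?_⟩
          have hval : 2 * a m - a s = a (m - (s - m)) := by omega
          rw [hval]
          exact Finset.mem_image_of_mem a (Finset.mem_Icc.mpr ⟨by omega, by omega⟩)
    have hn'le : 2 * m * (2 * a m) - n ≤ m * (2 * a m) := by
      rw [hBB, ← hB]; omega
    obtain ⟨l', hl'mem, hl'card, hl'sum⟩ := hlow (2 * m * (2 * a m) - n) hn'le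
    classical
    set l₀ := Multiset.filter (fun x => ¬ x = a (2 * m)) l' with hl₀
    set l₁ := Multiset.filter (fun x => x = a (2 * m)) l' with hl₁
    have hsplit : l₁ + l₀ = l' := Multiset.filter_add_not _ l'
    have hl₁rep : l₁ = Multiset.replicate (Multiset.card l₁) (a (2 * m)) :=
      (Multiset.eq_replicate_card).mpr (fun b hb => (Multiset.mem_filter.mp hb).2)
    have hl₁sum : l₁.sum = Multiset.card l₁ * (2 * a m) := by
      conv_lhs => rw [hl₁rep]
      rw [Multiset.sum_replicate, h2m, smul_eq_mul]
    have hcards : Multiset.card l₁ + Multiset.card l₀ = Multiset.card l' := by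
      rw [← Multiset.card_add, hsplit]
    have hsums : l₁.sum + l₀.sum = 2 * m * (2 * a m) - n := by
      rw [← Multiset.sum_add, hsplit, hl'sum]
    have hmap : (Multiset.map (fun x => 2 * a m - x) l₀).sum + l₀.sum =
        Multiset.card l₀ * (2 * a m) :=
      Stmt2Aux.map_sub_sum _ l₀
        (fun x hx => (hfull x (hl'mem x (Multiset.mem_of_mem_filter hx))).1)
    refine ⟨Multiset.map (fun x => 2 * a m - x) l₀ +
        Multiset.replicate (2 * m - Multiset.card l') (a (2 * m)), ?_, ?_, ?_⟩
    · intro x hx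
      simp only [Multiset.mem_add] at hx
      rcases hx with hx | hx
      · obtain ⟨y, hy, rfl⟩ := Multiset.mem_map.mp hx
        have hy' := Multiset.mem_filter.mp hy
        exact (hfull y (hl'mem y hy'.1)).2 hy'.2
      · rw [Multiset.eq_of_mem_replicate hx]
        exact ha2m_mem
    · simp only [Multiset.card_add, Multiset.card_map, Multiset.card_replicate]
      omega
    · rw [h2m]
      have hrep : (Multiset.replicate (2 * m - Multiset.card l') (2 * a m)).sum =
          (2 * m - Multiset.card l') * (2 * a m) := by
        rw [Multiset.sum_replicate, smul_eq_mul]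
      have hjoin : Multiset.card l₁ * (2 * a m) + Multiset.card l₀ * (2 * a m) +
          (2 * m - Multiset.card l') * (2 * a m) = 2 * m * (2 * a m) := by
        rw [← Nat.add_mul, ← Nat.add_mul]
        congr 1
        omega
      obtain ⟨K0, hK0⟩ : ∃ x, x = Multiset.card l₀ * (2 * a m) := ⟨_, rfl⟩
      obtain ⟨K1, hK1⟩ : ∃ x, x = Multiset.card l₁ * (2 * a m) := ⟨_, rfl⟩
      obtain ⟨K2, hK2⟩ : ∃ x, x = (2 * m - Multiset.card l') * (2 * a m) := ⟨_, rfl⟩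
      rw [← hK0] at hmap hjoin
      rw [← hK1] at hl₁sum hjoin
      rw [← hK2] at hrep hjoin
      rw [hBB] at hjoin hsums
      simp only [Multiset.sum_add, hrep]
      omega
end

section
/- Let m ≥ 1 and let A = {1 = a_1 < ... < a_m < â_m < a_{m+1} < ... < a_{2m}} be a symmetric base of odd size k = 2m+1 with a_i ≤ 3·a_{i-1} for 2 ≤ i ≤ m and â_m = a_m + x where 0 < x ≤ 2·a_m. Then A is compact: every integer n with 0 ≤ n ≤ (2m+1)·(â_m + a_m) can be written as a sum of at most 2m+1 elements of A, with repetition allowed. -/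
private lemma canRep_of_weak (A : Finset ℕ) (t n : ℕ)
    (h : ∃ l : Multiset ℕ, (∀ x ∈ l, x ∈ A ∨ x = 0) ∧ Multiset.card l ≤ t ∧ l.sum = n) :
    CanRep A t n := by
  obtain ⟨l, hmem, hc, hs⟩ := h
  refine ⟨l.filter (· ≠ 0), ?_, ?_, ?_⟩
  · intro x hx
    rw [Multiset.mem_filter] at hx
    rcases hmem x hx.1 with h | h
    · exact h
    · exact absurd h hx.2
  · exact le_trans (Multiset.card_le_card (Multiset.filter_le _ _)) hc
  · have hsplit := Multiset.filter_add_not (fun x => x ≠ 0) l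
    have h0 : (l.filter (fun x => ¬ x ≠ 0)).sum = 0 := by
      apply Multiset.sum_eq_zero
      intro x hx
      rw [Multiset.mem_filter] at hx
      simpa using hx.2
    have : (l.filter (fun x => x ≠ 0)).sum + (l.filter (fun x => ¬ x ≠ 0)).sum = l.sum := by
      rw [← Multiset.sum_add, hsplit]
    simp only [h0, add_zero] at this
    simpa [this] using hs

private lemma map_compl_sum (Mv : ℕ) (w : Multiset ℕ) (h : ∀ x ∈ w, x ≤ Mv) :
    (w.map (fun x => Mv - x)).sum + w.sum = Multiset.card w * Mv := by
  induction w using Multiset.induction_on with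
  | empty => simp
  | cons x s ih =>
    have hx : x ≤ Mv := h x (Multiset.mem_cons_self x s)
    have ihh := ih (fun y hy => h y (Multiset.mem_cons_of_mem hy))
    simp only [Multiset.map_cons, Multiset.sum_cons, Multiset.card_cons]
    have : (Multiset.card s + 1) * Mv = Multiset.card s * Mv + Mv := by ring
    omega

private lemma chain_mono (m : ℕ) (a : ℕ → ℕ)
    (hmono : ∀ i, 2 ≤ i → i ≤ m → a (i - 1) < a i) :
    ∀ i j, 1 ≤ i → i ≤ j → j ≤ m → a i ≤ a j := by
  intro i j hi hij
  induction j, hij using Nat.le_induction with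
  | base => intro _; exact le_rfl
  | succ j hij ih =>
    intro hjm
    have h1 : a j < a (j + 1) := by
      have := hmono (j + 1) (by omega) (by omega)
      simpa using this
    exact le_trans (ih (by omega)) (le_of_lt h1)

private lemma chain_pos (m : ℕ) (a : ℕ → ℕ) (ha1 : a 1 = 1)
    (hmono : ∀ i, 2 ≤ i → i ≤ m → a (i - 1) < a i) :
    ∀ i, 1 ≤ i → i ≤ m → 1 ≤ a i := by
  intro i hi him
  have := chain_mono m a hmono 1 i le_rfl hi him
  omega

private lemma chain_grow (m : ℕ) (a : ℕ → ℕ) (ha1 : a 1 = 1)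
    (h3 : ∀ i, 2 ≤ i → i ≤ m → a i ≤ 3 * a (i - 1)) :
    ∀ j, j + 1 ≤ m → a (j + 1) ≤ 2 * (∑ i ∈ Finset.Icc 1 j, a i) + 1 := by
  intro j
  induction j with
  | zero => intro h; simp [ha1]
  | succ j ih =>
    intro hjm
    show a (j + 2) ≤ 2 * (∑ i ∈ Finset.Icc 1 (j + 1), a i) + 1
    have hih := ih (by omega)
    have h3' : a (j + 2) ≤ 3 * a (j + 1) := by
      have := h3 (j + 2) (by omega) (by omega)
      simpa using this
    have hsum : ∑ i ∈ Finset.Icc 1 (j + 1), a i = (∑ i ∈ Finset.Icc 1 j, a i) + a (j + 1) :=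
      Finset.sum_Icc_succ_top (by omega) a
    omega

private lemma digit_lemma (m : ℕ) (a : ℕ → ℕ) (ha1 : a 1 = 1)
    (h3 : ∀ i, 2 ≤ i → i ≤ m → a i ≤ 3 * a (i - 1)) :
    ∀ j, j ≤ m → ∀ v, v ≤ 2 * (∑ i ∈ Finset.Icc 1 j, a i) →
    ∃ l : Multiset ℕ, (∀ x ∈ l, ∃ i, 1 ≤ i ∧ i ≤ m ∧ x = a i) ∧
      Multiset.card l ≤ 2 * j ∧ l.sum = v := by
  intro j
  induction j with
  | zero =>
    intro _ v hv
    refine ⟨0, by simp, by simp, ?_⟩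
    simp at hv ⊢
    omega
  | succ j ih =>
    intro hjm v hv
    have hsum : ∑ i ∈ Finset.Icc 1 (j + 1), a i = (∑ i ∈ Finset.Icc 1 j, a i) + a (j + 1) :=
      Finset.sum_Icc_succ_top (by omega) a
    have hgrow := chain_grow m a ha1 h3 j hjm
    rcases le_or_gt v (2 * (∑ i ∈ Finset.Icc 1 j, a i)) with h | h
    · obtain ⟨l, hl, hc, hs⟩ := ih (by omega) v h
      exact ⟨l, hl, by omega, hs⟩
    · rcases le_or_gt v (2 * (∑ i ∈ Finset.Icc 1 j, a i) + a (j + 1)) with h2 | h2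
      · obtain ⟨l, hl, hc, hs⟩ := ih (by omega) (v - a (j + 1)) (by omega)
        refine ⟨a (j + 1) ::ₘ l, ?_, ?_, ?_⟩
        · intro x hx
          rcases Multiset.mem_cons.mp hx with h | h
          · exact ⟨j + 1, by omega, by omega, h⟩
          · exact hl x h
        · simp; omega
        · simp [hs]; omega
      · obtain ⟨l, hl, hc, hs⟩ := ih (by omega) (v - 2 * a (j + 1)) (by omega)
        refine ⟨a (j + 1) ::ₘ a (j + 1) ::ₘ l, ?_, ?_, ?_⟩
        · intro x hx
          rcases Multiset.mem_cons.mp hx with h | h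
          · exact ⟨j + 1, by omega, by omega, h⟩
          rcases Multiset.mem_cons.mp h with h | h
          · exact ⟨j + 1, by omega, by omega, h⟩
          · exact hl x h
        · simp; omega
        · simp [hs]; omega

private lemma lemM (m : ℕ) (a : ℕ → ℕ) (ha1 : a 1 = 1)
    (hmono : ∀ i, 2 ≤ i → i ≤ m → a (i - 1) < a i)
    (h3 : ∀ i, 2 ≤ i → i ≤ m → a i ≤ 3 * a (i - 1)) :
    ∀ j, 1 ≤ j → j ≤ m → ∀ k, 1 ≤ k → ∀ g, g ≤ a j →
    ∃ u v : Multiset ℕ,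
      (∀ x ∈ u, ∃ i, 1 ≤ i ∧ i ≤ m ∧ x = a i) ∧
      (∀ x ∈ v, ∃ i, 1 ≤ i ∧ i ≤ m ∧ x = a i) ∧
      Multiset.card u ≤ k ∧ Multiset.card v ≤ 2 * j - 2 - k ∧
      u.sum = g + v.sum := by
  intro j hj1
  induction j, hj1 using Nat.le_induction with
  | base =>
    intro hm1 k hk g hg
    rw [ha1] at hg
    refine ⟨Multiset.replicate g (a 1), 0, ?_, by simp, ?_, by simp, ?_⟩
    · intro x hx
      rw [Multiset.eq_of_mem_replicate hx]
      exact ⟨1, le_rfl, hm1, rfl⟩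
    · simpa using le_trans hg hk
    · simp [Multiset.sum_replicate, ha1]
  | succ j hj ih =>
    intro hJm k hk g hg
    have hjm : j ≤ m := by omega
    have hajm : a j ≤ a m := chain_mono m a hmono j m (by omega) hjm le_rfl
    by_cases hgJ : g = a (j + 1)
    · refine ⟨{a (j + 1)}, 0, ?_, by simp, by simpa using hk, by simp, by simp [hgJ]⟩
      intro x hx
      rw [Multiset.mem_singleton] at hx
      exact ⟨j + 1, by omega, hJm, hx⟩
    have hglt : g < a (j + 1) := lt_of_le_of_ne hg hgJ
    have hJ3 : a (j + 1) ≤ 3 * a j := by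
      have := h3 (j + 1) (by omega) hJm
      simpa using this
    rcases Nat.lt_or_ge j 2 with hj1' | hj2
    · -- j = 1, so j+1 = 2
      have hj1'' : j = 1 := by omega
      subst hj1''
      simp only [show (1:ℕ) + 1 = 2 from rfl] at hJ3 hglt hg hgJ
      rw [ha1] at hJ3
      have ha2 : 1 < a 2 := by
        have := hmono 2 le_rfl hJm
        simpa [ha1] using this
      -- g < a 2 ≤ 3, so g ≤ 2
      have hg2 : g ≤ 2 := by omega
      rcases (by omega : g = 0 ∨ g = 1 ∨ g = 2) with rfl | rfl | rfl
      · exact ⟨0, 0, by simp, by simp, by simp, by simp, by simp⟩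
      · refine ⟨{a 1}, 0, ?_, by simp, by simpa using hk, by simp, by simp [ha1]⟩
        intro x hx
        rw [Multiset.mem_singleton] at hx
        exact ⟨1, le_rfl, by omega, hx⟩
      · -- g = 2, so a 2 = 3
        have ha23 : a 2 = 3 := by omega
        rcases Nat.lt_or_ge k 2 with hk1 | hk2
        · refine ⟨{a 2}, {a 1}, ?_, ?_, by simpa using hk, ?_, by simp [ha23, ha1]⟩
          · intro x hx
            rw [Multiset.mem_singleton] at hx
            exact ⟨2, by omega, hJm, hx⟩
          · intro x hx
            rw [Multiset.mem_singleton] at hx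
            exact ⟨1, by omega, by omega, hx⟩
          · simp
            omega
        · refine ⟨{a 1, a 1}, 0, ?_, by simp, ?_, by simp, by simp [ha1]⟩
          · intro x hx
            simp at hx
            exact ⟨1, le_rfl, by omega, hx⟩
          · simp
            omega
    · -- j ≥ 2
      have hjg : a j ≤ 2 * (∑ i ∈ Finset.Icc 1 (j - 1), a i) + 1 := by
        have h := chain_grow m a ha1 h3 (j - 1) (by omega)
        have hj' : j - 1 + 1 = j := by omega
        rwa [hj'] at h
      have hsmallj : ∀ x ∈ ({a j} : Multiset ℕ), ∃ i, 1 ≤ i ∧ i ≤ m ∧ x = a i := by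
        intro x hx
        rw [Multiset.mem_singleton] at hx
        exact ⟨j, by omega, hjm, hx⟩
      have hsmallJ : ∀ x ∈ ({a (j + 1)} : Multiset ℕ), ∃ i, 1 ≤ i ∧ i ≤ m ∧ x = a i := by
        intro x hx
        rw [Multiset.mem_singleton] at hx
        exact ⟨j + 1, by omega, hJm, hx⟩
      rcases Nat.lt_or_ge g (a j) with hc0 | hc1
      · -- c' = 0
        obtain ⟨u, v, hu, hv, hcu, hcv, hsum⟩ := ih hjm k hk g (le_of_lt hc0)
        exact ⟨u, v, hu, hv, hcu, by omega, hsum⟩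
      by_cases hgj : g = a j
      · exact ⟨{a j}, 0, hsmallj, by simp, by simpa using hk, by simp, by simp [hgj]⟩
      have hgj' : a j < g := lt_of_le_of_ne hc1 (Ne.symm hgj)
      rcases Nat.lt_or_ge g (2 * a j) with hc1' | hc2
      · -- c' = 1
        rcases Nat.lt_or_ge k 2 with hk1 | hk2
        · -- k = 1 : u = {a (j+1)}
          have hk1' : k = 1 := by omega
          rcases Nat.lt_or_ge (a (j + 1) - g) (a j) with hw | hw
          · obtain ⟨l, hl, hlc, hls⟩ := digit_lemma m a ha1 h3 (j - 1) (by omega)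
              (a (j + 1) - g) (by omega)
            refine ⟨{a (j + 1)}, l, hsmallJ, hl, by simp; omega, by omega, ?_⟩
            simp [hls]
            omega
          · obtain ⟨l, hl, hlc, hls⟩ := digit_lemma m a ha1 h3 (j - 1) (by omega)
              (a (j + 1) - g - a j) (by omega)
            refine ⟨{a (j + 1)}, a j ::ₘ l, hsmallJ, ?_, by simp; omega, ?_, ?_⟩
            · intro x hx
              rcases Multiset.mem_cons.mp hx with h | h
              · exact ⟨j, by omega, hjm, h⟩
              · exact hl x h
            · simp
              omega
            · simp [Multiset.sum_cons, hls]
              omega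
        · -- k ≥ 2: recurse with k-1 on g - a j
          obtain ⟨u, v, hu, hv, hcu, hcv, hsum⟩ := ih hjm (k - 1) (by omega) (g - a j) (by omega)
          refine ⟨a j ::ₘ u, v, ?_, hv, ?_, by omega, ?_⟩
          · intro x hx
            rcases Multiset.mem_cons.mp hx with h | h
            · exact ⟨j, by omega, hjm, h⟩
            · exact hu x h
          · simp
            omega
          · simp [Multiset.sum_cons, hsum]
            omega
      · -- c' = 2 : 2 a j ≤ g < a (j+1) ≤ 3 a j
        rcases Nat.lt_or_ge k 3 with hk2 | hk3
        · -- k ≤ 2 : u = {a (j+1)}, w ≤ a j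
          by_cases hwj : a (j + 1) - g = a j
          · refine ⟨{a (j + 1)}, {a j}, hsmallJ, hsmallj, by simp; omega, ?_, ?_⟩
            · simp
              omega
            · simp
              omega
          · have hw : a (j + 1) - g < a j := by omega
            obtain ⟨l, hl, hlc, hls⟩ := digit_lemma m a ha1 h3 (j - 1) (by omega)
              (a (j + 1) - g) (by omega)
            refine ⟨{a (j + 1)}, l, hsmallJ, hl, by simp; omega, by omega, ?_⟩
            simp [hls]
            omega
        · -- k ≥ 3
          obtain ⟨u, v, hu, hv, hcu, hcv, hsum⟩ := ih hjm (k - 2) (by omega) (g - 2 * a j)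
            (by omega)
          refine ⟨a j ::ₘ a j ::ₘ u, v, ?_, hv, ?_, by omega, ?_⟩
          · intro x hx
            rcases Multiset.mem_cons.mp hx with h | h
            · exact ⟨j, by omega, hjm, h⟩
            rcases Multiset.mem_cons.mp h with h | h
            · exact ⟨j, by omega, hjm, h⟩
            · exact hu x h
          · simp
            omega
          · simp [Multiset.sum_cons, hsum]
            omega

section memb
variable (m : ℕ) (a : ℕ → ℕ) (b : ℕ)

private lemma small_mem (hm : 1 ≤ m) :
    ∀ i, 1 ≤ i → i ≤ 2 * m → a i ∈ insert b ((Finset.Icc 1 (2 * m)).image a) := by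
  intro i hi him
  exact Finset.mem_insert_of_mem (Finset.mem_image.mpr ⟨i, Finset.mem_Icc.mpr ⟨hi, him⟩, rfl⟩)

private lemma big_compl (hm : 1 ≤ m)
    (hmono : ∀ i, 2 ≤ i → i ≤ m → a (i - 1) < a i)
    (hsym : ∀ i, 1 ≤ i → i ≤ m - 1 → a (m + i) = b + a m - a (m - i)) :
    ∀ i, 1 ≤ i → i ≤ m → (b + a m) - a i ∈ insert b ((Finset.Icc 1 (2 * m)).image a) := by
  intro i hi him
  rcases eq_or_lt_of_le him with heq | hlt
  · subst heq
    rw [show b + a i - a i = b by omega]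
    exact Finset.mem_insert_self _ _
  · have h1 : 1 ≤ m - i := by omega
    have h2 : m - i ≤ m - 1 := by omega
    have h := hsym (m - i) h1 h2
    rw [show m - (m - i) = i by omega] at h
    rw [← h]
    exact small_mem m a b hm (m + (m - i)) (by omega) (by omega)

private lemma compl_all (hm : 1 ≤ m) (ha1 : a 1 = 1)
    (hmono : ∀ i, 2 ≤ i → i ≤ m → a (i - 1) < a i)
    (hb : a m < b)
    (hsym : ∀ i, 1 ≤ i → i ≤ m - 1 → a (m + i) = b + a m - a (m - i))
    (h2m : a (2 * m) = b + a m) :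
    ∀ x ∈ insert b ((Finset.Icc 1 (2 * m)).image a),
      x ≤ b + a m ∧ ((b + a m) - x ∈ insert b ((Finset.Icc 1 (2 * m)).image a) ∨ x = b + a m) := by
  intro x hx
  rcases Finset.mem_insert.mp hx with h | hx
  · refine ⟨by rw [h]; omega, Or.inl ?_⟩
    rw [h, show b + a m - b = a m by omega]
    exact small_mem m a b hm m hm (by omega)
  · obtain ⟨i, hi, rfl⟩ := Finset.mem_image.mp hx
    rw [Finset.mem_Icc] at hi
    rcases le_or_gt i m with him | him
    · have hile : a i ≤ a m := chain_mono m a hmono i m hi.1 him le_rfl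
      exact ⟨by omega, Or.inl (big_compl m a b hm hmono hsym i hi.1 him)⟩
    · rcases eq_or_lt_of_le hi.2 with heq | hlt
      · subst heq
        exact ⟨by rw [h2m], Or.inr h2m⟩
      · -- m < i < 2m
        have h1 : 1 ≤ i - m := by omega
        have h2 : i - m ≤ m - 1 := by omega
        have h := hsym (i - m) h1 h2
        rw [show m + (i - m) = i by omega] at h
        have hsle : a (m - (i - m)) ≤ a m :=
          chain_mono m a hmono (m - (i - m)) m (by omega) (by omega) le_rfl
        constructor
        · omega
        · left
          rw [show b + a m - a i = a (m - (i - m)) by omega]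
          exact small_mem m a b hm (m - (i - m)) (by omega) (by omega)

end memb

private lemma lower_half (m : ℕ) (hm : 1 ≤ m) (a : ℕ → ℕ) (b : ℕ)
    (ha1 : a 1 = 1)
    (hmono : ∀ i, 2 ≤ i → i ≤ m → a (i - 1) < a i)
    (h3 : ∀ i, 2 ≤ i → i ≤ m → a i ≤ 3 * a (i - 1))
    (hb : a m < b) (hb2 : b ≤ a m + 2 * a m)
    (hsym : ∀ i, 1 ≤ i → i ≤ m - 1 → a (m + i) = b + a m - a (m - i))
    (h2m : a (2 * m) = b + a m) :
    ∀ n, 2 * n ≤ (2 * m + 1) * (b + a m) →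
      CanRep (insert b ((Finset.Icc 1 (2 * m)).image a)) (2 * m + 1) n := by
  intro n h2n
  set S := insert b ((Finset.Icc 1 (2 * m)).image a) with hS
  have ham : 1 ≤ a m := chain_pos m a ha1 hmono m hm le_rfl
  set Mv := b + a m with hMv
  have hMv4 : Mv ≤ 4 * a m := by omega
  have hMvpos : 0 < Mv := by omega
  by_cases hn0 : n = 0
  · exact ⟨0, by simp, by simp, by simp [hn0]⟩
  -- q = (n-1)/Mv
  set q := (n - 1) / Mv with hq
  have hdm := Nat.div_add_mod (n - 1) Mv
  have hmod : (n - 1) % Mv < Mv := Nat.mod_lt _ hMvpos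
  have hqq : Mv * q + (n - 1) % Mv = n - 1 := hdm
  have hA1 : q * Mv + 1 ≤ n := by
    have : q * Mv = Mv * q := by ring
    omega
  have hA2 : n ≤ q * Mv + Mv := by
    have : q * Mv = Mv * q := by ring
    omega
  -- q ≤ m
  have hqm : q ≤ m := by
    by_contra hcon
    push_neg at hcon
    have h1 : (m + 1) * Mv ≤ q * Mv := Nat.mul_le_mul_right Mv (by omega)
    have h2 : 2 * ((m + 1) * Mv) = (2 * m + 1) * Mv + Mv := by ring
    omega
  -- f = t*Mv - n with t = q+1
  set f := q * Mv + Mv - n with hf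
  have hfMv : f < Mv := by omega
  have hf4 : f < 4 * a m := by omega
  set c := f / a m with hc
  set g := f % a m with hg
  have hcg : c * a m + g = f := by
    have h := Nat.div_add_mod f (a m)
    rw [← hc, ← hg] at h
    have hcomm : a m * c = c * a m := by ring
    omega
  have hgam : g < a m := Nat.mod_lt _ (by omega)
  have hc3 : c ≤ 3 := by
    by_contra hcon
    push_neg at hcon
    have h1 : 4 * a m ≤ c * a m := Nat.mul_le_mul_right (a m) (by omega)
    omega
  rcases le_or_gt f (q * a m + a m) with hcase | hcase
  · -- Case 1 : f ≤ (q+1) * a m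
    have hct : c ≤ q + 1 := by
      by_contra hcon
      push_neg at hcon
      have h1 : (q + 2) * a m ≤ c * a m := Nat.mul_le_mul_right (a m) (by omega)
      have h2 : (q + 2) * a m = q * a m + a m + a m := by ring
      omega
    rcases eq_or_lt_of_le hct with hceq | hclt
    · -- c = q+1 : f = (q+1) * a m, n = (q+1) * b
      have hfeq : f = (q + 1) * a m := by
        have h1 : (q + 1) * a m ≤ f := by
          rw [← hceq]
          omega
        have h2 : (q + 1) * a m = q * a m + a m := by ring
        omega
      refine ⟨Multiset.replicate (q + 1) b, ?_, ?_, ?_⟩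
      · intro x hx
        rw [Multiset.eq_of_mem_replicate hx]
        exact Finset.mem_insert_self _ _
      · simp
        omega
      · rw [Multiset.sum_replicate, smul_eq_mul]
        have h2 : (q + 1) * Mv = q * Mv + Mv := by ring
        have h3 : (q + 1) * Mv = (q + 1) * b + (q + 1) * a m := by rw [hMv]; ring
        omega
    · -- c ≤ q : use lemM with k = q + 1 - c
      obtain ⟨u, v, hu, hv, hcu, hcv, husum⟩ :=
        lemM m a ha1 hmono h3 m (by omega) le_rfl (q + 1 - c) (by omega) g (le_of_lt hgam)
      set subs := Multiset.replicate c (a m) + u with hsubs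
      have hsubs_small : ∀ x ∈ subs, ∃ i, 1 ≤ i ∧ i ≤ m ∧ x = a i := by
        intro x hx
        rcases Multiset.mem_add.mp hx with h | h
        · rw [Multiset.eq_of_mem_replicate h]
          exact ⟨m, hm, le_rfl, rfl⟩
        · exact hu x h
      have hsubs_le : ∀ x ∈ subs, x ≤ Mv := by
        intro x hx
        obtain ⟨i, hi1, him, rfl⟩ := hsubs_small x hx
        have := chain_mono m a hmono i m hi1 him le_rfl
        omega
      have hsubs_card : Multiset.card subs = c + Multiset.card u := by
        simp [hsubs]
      have hsubs_sum : subs.sum = c * a m + u.sum := by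
        simp [hsubs, Multiset.sum_replicate, smul_eq_mul]
      have hκ : Multiset.card subs ≤ q + 1 := by omega
      refine ⟨subs.map (fun x => Mv - x) + Multiset.replicate (q + 1 - Multiset.card subs) Mv + v,
        ?_, ?_, ?_⟩
      · intro x hx
        rcases Multiset.mem_add.mp hx with h | h
        · rcases Multiset.mem_add.mp h with h' | h'
          · obtain ⟨y, hy, rfl⟩ := Multiset.mem_map.mp h'
            obtain ⟨i, hi1, him, rfl⟩ := hsubs_small y hy
            exact big_compl m a b hm hmono hsym i hi1 him
          · rw [Multiset.eq_of_mem_replicate h']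
            rw [hS, ← h2m]
            exact small_mem m a b hm (2 * m) (by omega) le_rfl
        · obtain ⟨i, hi1, him, rfl⟩ := hv x h
          exact small_mem m a b hm i hi1 (by omega)
      · simp only [Multiset.card_add, Multiset.card_map, Multiset.card_replicate]
        omega
      · simp only [Multiset.sum_add, Multiset.sum_replicate, smul_eq_mul]
        have hmap := map_compl_sum Mv subs hsubs_le
        have hbridge : Multiset.card subs * Mv + (q + 1 - Multiset.card subs) * Mv
            = (q + 1) * Mv := by
          rw [← Nat.add_mul]
          congr 1
          omega
        have h2 : (q + 1) * Mv = q * Mv + Mv := by ring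
        omega
  · -- Case 2 : f > (q+1) * a m, so q ≤ 2 and positive rep
    have hq2 : q + 1 ≤ 3 := by
      by_contra hcon
      push_neg at hcon
      have h1 : 3 * a m ≤ q * a m := Nat.mul_le_mul_right (a m) (by omega)
      omega
    set r := n - q * Mv with hr
    have hrf : r + f = Mv := by omega
    set cp := r / a m with hcp
    set gp := r % a m with hgp
    have hcpg : cp * a m + gp = r := by
      have h := Nat.div_add_mod r (a m)
      rw [← hcp, ← hgp] at h
      have hcomm : a m * cp = cp * a m := by ring
      omega
    have hgpam : gp < a m := Nat.mod_lt _ (by omega)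
    have hcpb : cp + q + 1 ≤ 3 := by
      by_contra hcon
      push_neg at hcon
      have h1 : (3 - q) * a m ≤ cp * a m := Nat.mul_le_mul_right (a m) (by omega)
      have h2 : (3 - q) * a m + q * a m = 3 * a m := by
        rw [← Nat.add_mul]
        congr 1
        omega
      have h3 : 3 * a m + a m = 4 * a m := by ring
      omega
    have hgrow : a m ≤ 2 * (∑ i ∈ Finset.Icc 1 (m - 1), a i) + 1 := by
      rcases Nat.eq_or_lt_of_le hm with h1 | h1
      · simp [← h1, ha1]
      · have h := chain_grow m a ha1 h3 (m - 1) (by omega)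
        rwa [show m - 1 + 1 = m by omega] at h
    obtain ⟨l, hl, hlc, hls⟩ := digit_lemma m a ha1 h3 (m - 1) (by omega) gp (by omega)
    refine ⟨Multiset.replicate q Mv + Multiset.replicate cp (a m) + l, ?_, ?_, ?_⟩
    · intro x hx
      rcases Multiset.mem_add.mp hx with h | h
      · rcases Multiset.mem_add.mp h with h' | h'
        · rw [Multiset.eq_of_mem_replicate h']
          rw [hS, ← h2m]
          exact small_mem m a b hm (2 * m) (by omega) le_rfl
        · rw [Multiset.eq_of_mem_replicate h']
          exact small_mem m a b hm m (by omega) (by omega)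
      · obtain ⟨i, hi1, him, rfl⟩ := hl x h
        exact small_mem m a b hm i hi1 (by omega)
    · simp only [Multiset.card_add, Multiset.card_replicate]
      omega
    · simp only [Multiset.sum_add, Multiset.sum_replicate, smul_eq_mul]
      omega

theorem stmt_3 (m : ℕ) (hm : 1 ≤ m) (a : ℕ → ℕ) (b : ℕ)
    (ha1 : a 1 = 1)
    (hmono : ∀ i, 2 ≤ i → i ≤ m → a (i - 1) < a i)
    (h3 : ∀ i, 2 ≤ i → i ≤ m → a i ≤ 3 * a (i - 1))
    (hb : a m < b) (hb2 : b ≤ a m + 2 * a m)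
    (hsym : ∀ i, 1 ≤ i → i ≤ m - 1 → a (m + i) = b + a m - a (m - i))
    (h2m : a (2 * m) = b + a m) :
    ∀ n ≤ (2 * m + 1) * (b + a m),
      CanRep (insert b ((Finset.Icc 1 (2 * m)).image a)) (2 * m + 1) n := by
  intro n hn
  set S := insert b ((Finset.Icc 1 (2 * m)).image a) with hS
  set Mv := b + a m with hMv
  rcases le_or_gt (2 * n) ((2 * m + 1) * Mv) with hlow | hhigh
  · exact lower_half m hm a b ha1 hmono h3 hb hb2 hsym h2m n hlow
  · have hlow' : 2 * ((2 * m + 1) * Mv - n) ≤ (2 * m + 1) * Mv := by omega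
    obtain ⟨l, hlS, hlc, hls⟩ := lower_half m hm a b ha1 hmono h3 hb hb2 hsym h2m
      ((2 * m + 1) * Mv - n) hlow'
    have hcompl := compl_all m a b hm ha1 hmono hb hsym h2m
    apply canRep_of_weak
    refine ⟨l.map (fun x => Mv - x) + Multiset.replicate (2 * m + 1 - Multiset.card l) Mv,
      ?_, ?_, ?_⟩
    · intro x hx
      rcases Multiset.mem_add.mp hx with h | h
      · obtain ⟨y, hy, rfl⟩ := Multiset.mem_map.mp h
        rcases (hcompl y (hlS y hy)).2 with h' | h'
        · exact Or.inl h'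
        · right
          rw [h']
          omega
      · rw [Multiset.eq_of_mem_replicate h]
        exact Or.inl (hcompl b (Finset.mem_insert_self _ _) |>.2.elim
          (fun _ => by
            have : Mv ∈ S := by
              rw [hS, ← h2m]
              exact Finset.mem_insert_of_mem
                (Finset.mem_image.mpr ⟨2 * m, Finset.mem_Icc.mpr ⟨by omega, le_rfl⟩, rfl⟩)
            exact this)
          (fun _ => by
            have : Mv ∈ S := by
              rw [hS, ← h2m]
              exact Finset.mem_insert_of_mem
                (Finset.mem_image.mpr ⟨2 * m, Finset.mem_Icc.mpr ⟨by omega, le_rfl⟩, rfl⟩)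
            exact this))
    · simp only [Multiset.card_add, Multiset.card_map, Multiset.card_replicate]
      omega
    · simp only [Multiset.sum_add, Multiset.sum_replicate, smul_eq_mul]
      have hle : ∀ x ∈ l, x ≤ Mv := fun x hx => (hcompl x (hlS x hx)).1
      have hmap := map_compl_sum Mv l hle
      have hbridge : Multiset.card l * Mv + (2 * m + 1 - Multiset.card l) * Mv
          = (2 * m + 1) * Mv := by
        rw [← Nat.add_mul]
        congr 1
        omega
      omega
end

section
/- Let a_m and â_m be positive integers with a_m ≤ â_m ≤ 3·a_m, and let n be a nonnegative integer with n ≥ 2·(â_m + a_m). Then there exist nonnegative integers q̂, q, r with n = q̂·â_m + q·a_m + r, 0 ≤ r < a_m, and |q̂ − q| ≤ 2. -/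
theorem stmt_4 (am bm n : ℕ) (ham : 0 < am) (h1 : am ≤ bm) (h2 : bm ≤ 3 * am)
    (hn : 2 * (bm + am) ≤ n) :
    ∃ qh q r : ℕ, n = qh * bm + q * am + r ∧ r < am ∧
      |(qh : ℤ) - (q : ℤ)| ≤ 2 := by
  set k := n / (bm + am) with hk
  set r' := n % (bm + am) with hr'
  have hdiv : n = k * (bm + am) + r' := by rw [hk, hr', Nat.mul_comm]; exact (Nat.div_add_mod n (bm + am)).symm
  have hlt : r' < bm + am := Nat.mod_lt _ (by omega)
  have hmul1 : k * (bm + am) = k * bm + k * am := by ring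
  by_cases hcase : bm ≤ r'
  · have hmul2 : (k + 1) * bm = k * bm + bm := by ring
    refine ⟨k + 1, k, r' - bm, by omega, by omega, ?_⟩
    have : ((k : ℤ) + 1) - k = 1 := by ring
    push_cast
    rw [this]
    norm_num
  · set q2 := r' / am with hq2
    set r := r' % am with hr
    have hdiv2 : r' = q2 * am + r := by rw [hq2, hr, Nat.mul_comm]; exact (Nat.div_add_mod r' am).symm
    have hrlt : r < am := Nat.mod_lt _ ham
    have hq2le : q2 ≤ 2 := by
      have : r' < 3 * am := by omega
      have := Nat.div_lt_of_lt_mul (by omega : r' < am * 3)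
      omega
    refine ⟨k, k + q2, r, ?_, hrlt, ?_⟩
    · have hmul2 : (k + q2) * am = k * am + q2 * am := by ring
      omega
    · have h : ((k : ℤ)) - ((k : ℤ) + q2) = -(q2 : ℤ) := by ring
      push_cast
      rw [h, abs_neg]
      rw [abs_of_nonneg (by positivity)]
      exact_mod_cast hq2le
end

section
/- Let m ≥ 2 and let A = {1 = a_1 < a_2 < ... < a_{2m}} be a symmetric base of even size with a_i ≥ 8·a_{i-1} for all 2 ≤ i ≤ m. Then A is not compact: there exists an integer n with 0 ≤ n ≤ 2m·a_{2m} that cannot be written as a sum of at most 2m elements of A with repetition. -/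
private lemma pasc3 (n r : ℕ) :
    (n+1+1+1).choose (r+1+1+1)
      = n.choose r + 3*(n.choose (r+1)) + 3*(n.choose (r+1+1)) + n.choose (r+1+1+1) := by
  simp [Nat.choose_succ_succ]
  ring

private lemma choose_step (k : ℕ) :
    4 * Nat.choose (3*k+8) (k+2) ≤ 27 * Nat.choose (3*k+5) (k+1) := by
  cases k with
  | zero => decide
  | succ j =>
    set Cm1 := Nat.choose (3*j+8) j with hCm1
    set C0 := Nat.choose (3*j+8) (j+1) with hC0
    set C1 := Nat.choose (3*j+8) (j+1+1) with hC1
    set C2 := Nat.choose (3*j+8) (j+1+1+1) with hC2d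
    have hT : Nat.choose (3*(j+1)+8) ((j+1)+2) = Cm1 + 3*C0 + 3*C1 + C2 := by
      have h1 : 3*(j+1)+8 = (3*j+8)+1+1+1 := by ring
      have h2 : (j+1)+2 = j+1+1+1 := by ring
      rw [h1, h2, pasc3]
    have i1 : C0 * (j+1) = Cm1 * (2*j+8) := by
      have := Nat.choose_succ_right_eq (3*j+8) j
      rwa [show 3*j+8 - j = 2*j+8 by omega] at this
    have i2 : C1 * (j+2) = C0 * (2*j+7) := by
      have := Nat.choose_succ_right_eq (3*j+8) (j+1)
      rwa [show 3*j+8 - (j+1) = 2*j+7 by omega, show j+1+1 = j+2 from rfl] at this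
    have i3 : C2 * (j+3) = C1 * (2*j+6) := by
      have := Nat.choose_succ_right_eq (3*j+8) (j+2)
      rwa [show 3*j+8 - (j+2) = 2*j+6 by omega, show j+2+1 = j+1+1+1 by ring,
        show j+1+1 = j+2 from rfl] at this
    have hC2 : C2 = 2*C1 := by
      have : C2 * (j+3) = (2*C1) * (j+3) := by rw [i3]; ring
      exact Nat.eq_of_mul_eq_mul_right (by omega) this
    have hmain : 4*Cm1 + 12*C0 ≤ 7*C1 := by
      have hpos : 0 < (2*j+8)*(2*j+7) := by positivity
      refine Nat.le_of_mul_le_mul_right ?_ hpos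
      have coef : 4*((j+2)*(j+1)) + 12*((j+2)*(2*j+8)) ≤ 7*((2*j+8)*(2*j+7)) := by nlinarith
      calc (4*Cm1 + 12*C0) * ((2*j+8)*(2*j+7))
          = 4*(Cm1*(2*j+8))*(2*j+7) + 12*(C0*(2*j+7))*(2*j+8) := by ring
        _ = 4*(C0*(j+1))*(2*j+7) + 12*(C1*(j+2))*(2*j+8) := by rw [← i1, ← i2]
        _ = 4*(C0*(2*j+7))*(j+1) + 12*(C1*(j+2))*(2*j+8) := by ring
        _ = 4*(C1*(j+2))*(j+1) + 12*(C1*(j+2))*(2*j+8) := by rw [← i2]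
        _ = C1 * (4*((j+2)*(j+1)) + 12*((j+2)*(2*j+8))) := by ring
        _ ≤ C1 * (7*((2*j+8)*(2*j+7))) := Nat.mul_le_mul_left _ coef
        _ = (7*C1) * ((2*j+8)*(2*j+7)) := by ring
    rw [show 3*(j+1)+5 = 3*j+8 by ring, hT]
    omega

private lemma choose_pow_bound : ∀ k : ℕ, 4 * Nat.choose (3*k+5) (k+1) ≤ 27 * 8^k := by
  intro k
  induction k with
  | zero => decide
  | succ k ih =>
    have h1 := choose_step k
    have h2 : 4 * (4 * Nat.choose (3*(k+1)+5) ((k+1)+1)) ≤ 4 * (27 * 8^(k+1)) := by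
      have e : 3*(k+1)+5 = 3*k+8 := by ring
      have e2 : (k+1)+1 = k+2 := by ring
      rw [e, e2]
      calc 4 * (4 * Nat.choose (3*k+8) (k+2)) ≤ 4 * (27 * Nat.choose (3*k+5) (k+1)) := by
            exact Nat.mul_le_mul_left _ h1
        _ = 27 * (4 * Nat.choose (3*k+5) (k+1)) := by ring
        _ ≤ 27 * (27 * 8^k) := Nat.mul_le_mul_left _ ih
        _ ≤ 27 * (32 * 8^k) := by
            have : (27:ℕ) * 8^k ≤ 32 * 8^k := Nat.mul_le_mul_right _ (by norm_num)
            exact Nat.mul_le_mul_left _ this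
        _ = 4 * (27 * 8^(k+1)) := by ring
    exact Nat.le_of_mul_le_mul_left h2 (by norm_num)

private lemma choose_lt_pow (m : ℕ) (hm : 2 ≤ m) :
    Nat.choose (3*m-1) (m-1) < 8^(m-1) := by
  obtain ⟨k, rfl⟩ : ∃ k, m = k + 2 := ⟨m - 2, by omega⟩
  have h := choose_pow_bound k
  rw [show 3*(k+2)-1 = 3*k+5 by omega, show (k+2)-1 = k+1 by omega]
  have hp : 0 < (8:ℕ)^k := by positivity
  have h8 : (8:ℕ)^(k+1) = 8 * 8^k := by rw [pow_succ]; ring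
  omega

theorem stmt_9 (m : ℕ) (hm : 2 ≤ m) (a : ℕ → ℕ)
    (ha1 : a 1 = 1)
    (hmono : ∀ i, 2 ≤ i → i ≤ m → a (i - 1) < a i)
    (h8 : ∀ i, 2 ≤ i → i ≤ m → 8 * a (i - 1) ≤ a i)
    (hsym : ∀ i, 1 ≤ i → i ≤ m - 1 → a (m + i) = 2 * a m - a (m - i))
    (h2m : a (2 * m) = 2 * a m) :
    ∃ n ≤ 2 * m * a (2 * m), ¬ CanRep ((Finset.Icc 1 (2 * m)).image a) (2 * m) n := by
  classical
  set A := (Finset.Icc 1 (2 * m)).image a with hA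
  -- monotonicity on [1, m]
  have hle : ∀ i j, 1 ≤ i → i ≤ j → j ≤ m → a i ≤ a j := by
    intro i j h1 hij
    induction j, hij using Nat.le_induction with
    | base => intro _; exact le_rfl
    | succ j hij ih =>
      intro hjm
      have h := hmono (j+1) (by omega) hjm
      rw [show j+1-1 = j by omega] at h
      exact le_trans (ih (by omega)) (le_of_lt h)
  -- growth
  have hpow : ∀ i, 1 ≤ i → i ≤ m → 8^(i-1) ≤ a i := by
    intro i h1 him
    induction i, h1 using Nat.le_induction with
    | base => simp [ha1]
    | succ i hi ih =>
      have h := h8 (i+1) (by omega) him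
      rw [show i+1-1 = i by omega] at h
      have hi8 : 8^(i-1) ≤ a i := ih (by omega)
      calc 8^(i+1-1) = 8^(i-1+1) := by rw [show i+1-1 = i-1+1 by omega]
        _ = 8^(i-1) * 8 := pow_succ 8 (i-1)
        _ ≤ a i * 8 := Nat.mul_le_mul_right _ hi8
        _ = 8 * a i := by ring
        _ ≤ a (i+1) := h
  have hpowm : 8^(m-1) ≤ a m := hpow m (by omega) le_rfl
  have ham1 : 1 ≤ a m := le_trans (Nat.one_le_two_pow.trans (by
    exact Nat.pow_le_pow_left (by norm_num) _)) hpowm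
  -- indices ≥ m give values ≥ a m
  have hge : ∀ j, m ≤ j → j ≤ 2*m → a m ≤ a j := by
    intro j hmj hj2
    rcases eq_or_lt_of_le hmj with rfl | hlt
    · exact le_rfl
    rcases eq_or_lt_of_le hj2 with rfl | hlt2
    · rw [h2m]; omega
    · set i := j - m with hi
      have h := hsym i (by omega) (by omega)
      rw [show m + i = j by omega] at h
      have hsmall : a (m - i) ≤ a m := hle (m-i) m (by omega) (by omega) le_rfl
      omega
  -- the tokens
  have hm0 : 0 < m := by omega
  set v : Fin m → ℕ := fun i => if (i : ℕ) < m - 1 then a ((i : ℕ) + 1) else 0 with hv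
  set Φ : Sym (Fin m) (2*m) → ℕ := fun s => ((s : Multiset (Fin m)).map v).sum with hΦ
  -- every small representable number is in the image of Φ
  have main : ∀ n, n < a m → CanRep A (2*m) n → ∃ s : Sym (Fin m) (2*m), Φ s = n := by
    intro n hn ⟨l, hlA, hlc, hls⟩
    have hxsmall : ∀ x ∈ l, ∃ j, 1 ≤ j ∧ j ≤ m-1 ∧ a j = x := by
      intro x hx
      have hxa := hlA x hx
      rw [hA, Finset.mem_image] at hxa
      obtain ⟨j, hj, hjx⟩ := hxa
      rw [Finset.mem_Icc] at hj
      have hxle : x ≤ n := le_trans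
        (Multiset.single_le_sum (fun y _ => Nat.zero_le y) x hx) (le_of_eq hls)
      by_cases hjm : j ≤ m-1
      · exact ⟨j, hj.1, hjm, hjx⟩
      · exfalso
        have := hge j (by omega) hj.2
        omega
    set idx : ℕ → Fin m := fun x =>
      if h : ∃ j, 1 ≤ j ∧ j ≤ m-1 ∧ a j = x then
        ⟨h.choose - 1, by have := h.choose_spec; omega⟩
      else ⟨0, hm0⟩ with hidxdef
    have hidx : ∀ x ∈ l, v (idx x) = x := by
      intro x hx
      have h := hxsmall x hx
      simp only [hidxdef, dif_pos h]
      have hs := h.choose_spec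
      have hlt : h.choose - 1 < m - 1 := by omega
      simp only [hv, if_pos hlt]
      rw [show h.choose - 1 + 1 = h.choose by omega]
      exact hs.2.2
    set pad : Fin m := ⟨m-1, by omega⟩ with hpad
    have hvpad : v pad = 0 := by simp [hv, hpad]
    set t : Multiset (Fin m) := l.map idx + Multiset.replicate (2*m - Multiset.card l) pad
      with htdef
    have ht : Multiset.card t = 2*m := by
      simp only [htdef, Multiset.card_add, Multiset.card_map, Multiset.card_replicate]
      omega
    refine ⟨⟨t, ht⟩, ?_⟩
    show ((t : Multiset (Fin m)).map v).sum = n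
    have hmapeq : l.map (fun x => v (idx x)) = l := by
      conv_rhs => rw [← Multiset.map_id l]
      exact Multiset.map_congr rfl hidx
    simp only [htdef, Multiset.map_add, Multiset.sum_add, Multiset.map_map,
      Multiset.map_replicate, Function.comp, hvpad, Multiset.sum_replicate, smul_zero,
      add_zero]
    rw [hmapeq, hls]
  -- counting
  set R : Finset ℕ := (Finset.range (a m)).filter (fun n => CanRep A (2*m) n) with hR
  have hcard : R.card < a m := by
    have hsub : R ⊆ Finset.image Φ Finset.univ := by
      intro n hn
      rw [hR, Finset.mem_filter, Finset.mem_range] at hn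
      obtain ⟨s, hs⟩ := main n hn.1 hn.2
      exact Finset.mem_image.2 ⟨s, Finset.mem_univ _, hs⟩
    have h1 : R.card ≤ Fintype.card (Sym (Fin m) (2*m)) := by
      calc R.card ≤ (Finset.image Φ Finset.univ).card := Finset.card_le_card hsub
        _ ≤ (Finset.univ : Finset (Sym (Fin m) (2*m))).card := Finset.card_image_le
        _ = Fintype.card (Sym (Fin m) (2*m)) := Finset.card_univ
    have h2 : Fintype.card (Sym (Fin m) (2*m)) = Nat.choose (3*m-1) (m-1) := by
      rw [Sym.card_sym_eq_choose, Fintype.card_fin,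
        show m + 2*m - 1 = 3*m-1 by omega]
      rw [← Nat.choose_symm (show 2*m ≤ 3*m-1 by omega),
        show 3*m-1 - 2*m = m-1 by omega]
    have h3 := choose_lt_pow m hm
    omega
  -- find the gap
  have hex : ∃ n ∈ Finset.range (a m), n ∉ R := by
    by_contra hcon
    push_neg at hcon
    have hsub : Finset.range (a m) ⊆ R := fun n hn => hcon n hn
    have := Finset.card_le_card hsub
    rw [Finset.card_range] at this
    omega
  obtain ⟨n, hn1, hn2⟩ := hex
  rw [Finset.mem_range] at hn1
  refine ⟨n, ?_, ?_⟩
  · have key : a (2*m) ≤ 2*m * a (2*m) := Nat.le_mul_of_pos_left _ (by omega)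
    have : n ≤ a (2*m) := by omega
    omega
  · intro hcan
    exact hn2 (by rw [hR, Finset.mem_filter]; exact ⟨Finset.mem_range.2 hn1, hcan⟩)
end

section
/- Let m ≥ 5 and let A = {1 = a_1 < ... < a_m < â_m < a_{m+1} < ... < a_{2m}} be a symmetric base of odd size k = 2m+1 with a_i ≥ 8·a_{i-1} for 2 ≤ i ≤ m and â_m = a_m + x with x ≥ 7·a_m. Then A is not compact: some integer n with 0 ≤ n ≤ (2m+1)·(â_m + a_m) cannot be written as a sum of at most 2m+1 elements of A with repetition. -/
/-- The finset of all sums of at most `t` elements of `{a 1, ..., a j}` (with repetition). -/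
def RS (a : ℕ → ℕ) : ℕ → ℕ → Finset ℕ
  | 0, _ => {0}
  | _ + 1, 0 => {0}
  | j + 1, t + 1 => RS a j (t + 1) ∪ (RS a (j + 1) t).image (fun s => a (j + 1) + s)

lemma RS_zero_right (a : ℕ → ℕ) (j : ℕ) : RS a j 0 = {0} := by
  cases j <;> simp [RS]

lemma RS_succ_succ (a : ℕ → ℕ) (j t : ℕ) :
    RS a (j + 1) (t + 1) =
      RS a j (t + 1) ∪ (RS a (j + 1) t).image (fun s => a (j + 1) + s) := by
  rw [RS]

lemma mem_RS (a : ℕ → ℕ) :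
    ∀ t j (l : Multiset ℕ), (∀ x ∈ l, ∃ i, 1 ≤ i ∧ i ≤ j ∧ x = a i) →
      Multiset.card l ≤ t → l.sum ∈ RS a j t := by
  intro t
  induction t with
  | zero =>
    intro j l _ hcard
    have : l = 0 := Multiset.card_eq_zero.mp (Nat.le_zero.mp hcard)
    subst this
    simp [RS_zero_right]
  | succ t ih =>
    intro j
    induction j with
    | zero =>
      intro l hl _
      have : l = 0 := by
        rcases Multiset.empty_or_exists_mem l with h | ⟨x, hx⟩
        · exact h
        · obtain ⟨i, h1, h2, _⟩ := hl x hx; omega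
      subst this
      simp [RS]
    | succ j ihj =>
      intro l hl hcard
      by_cases h : a (j + 1) ∈ l
      · have hl' : a (j + 1) ::ₘ l.erase (a (j + 1)) = l := Multiset.cons_erase h
        have hsum : l.sum = a (j + 1) + (l.erase (a (j + 1))).sum := by
          conv_lhs => rw [← hl']
          simp
        have hcard' : Multiset.card (l.erase (a (j + 1))) ≤ t := by
          rw [Multiset.card_erase_of_mem h, Nat.pred_eq_sub_one]
          omega
        have hmem : (l.erase (a (j + 1))).sum ∈ RS a (j + 1) t := by
          apply ih (j + 1)
          · intro x hx
            exact hl x (Multiset.mem_of_mem_erase hx)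
          · exact hcard'
        rw [RS_succ_succ]
        apply Finset.mem_union_right
        rw [Finset.mem_image]
        exact ⟨_, hmem, hsum.symm⟩
      · have : l.sum ∈ RS a j (t + 1) := by
          apply ihj
          · intro x hx
            obtain ⟨i, h1, h2, h3⟩ := hl x hx
            refine ⟨i, h1, ?_, h3⟩
            rcases Nat.lt_or_ge i (j + 1) with hi | hi
            · omega
            · exfalso
              have : i = j + 1 := by omega
              subst this
              exact h (h3 ▸ hx)
          · exact hcard
        rw [RS_succ_succ]
        exact Finset.mem_union_left _ this

lemma card_RS (a : ℕ → ℕ) : ∀ t j, (RS a j t).card ≤ (j + t).choose j := by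
  intro t
  induction t with
  | zero =>
    intro j
    rw [RS_zero_right]
    simp
  | succ t ih =>
    intro j
    induction j with
    | zero => simp [RS]
    | succ j ihj =>
      rw [RS_succ_succ]
      calc (RS a j (t + 1) ∪ (RS a (j + 1) t).image (fun s => a (j + 1) + s)).card
          ≤ (RS a j (t + 1)).card + ((RS a (j + 1) t).image (fun s => a (j + 1) + s)).card :=
            Finset.card_union_le _ _
        _ ≤ (j + (t + 1)).choose j + (RS a (j + 1) t).card :=
            Nat.add_le_add ihj (Finset.card_image_le)
        _ ≤ (j + (t + 1)).choose j + ((j + 1) + t).choose (j + 1) :=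
            Nat.add_le_add_left (ih (j + 1)) _
        _ = ((j + 1) + (t + 1)).choose (j + 1) := by
            have : (j + 1) + (t + 1) = (j + t + 1) + 1 := by omega
            rw [this, Nat.choose_succ_succ (j + t + 1) j]
            congr 2 <;> omega

lemma choose_le_seven_pow : ∀ m : ℕ, (3 * m + 1).choose m ≤ 7 ^ m := by
  intro m
  induction m with
  | zero => simp
  | succ m ih =>
    have key : (3 * (m + 1) + 1).choose (m + 1) ≤ 7 * (3 * m + 1).choose m := by
      have h1 : (3 * m + 1).choose m * (3 * m + 1 + 1) =
          (3 * m + 1 + 1).choose m * (3 * m + 1 + 1 - m) := Nat.choose_mul_succ_eq _ _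
      have h2 : (3 * m + 2).choose m * (3 * m + 2 + 1) =
          (3 * m + 2 + 1).choose m * (3 * m + 2 + 1 - m) := Nat.choose_mul_succ_eq _ _
      have h3 : (3 * m + 3 + 1) * (3 * m + 3).choose m =
          (3 * m + 3 + 1).choose (m + 1) * (m + 1) := Nat.add_one_mul_choose_eq _ _
      have e1 : (3 * m + 1 + 1 - m) = 2 * m + 2 := by omega
      have e2 : (3 * m + 2 + 1 - m) = 2 * m + 3 := by omega
      rw [e1] at h1
      rw [e2] at h2
      -- combine: choose(3m+4, m+1) * ((m+1)*(2m+3)*(2m+2))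
      --        = (3m+4)*(3m+3)*(3m+2) * choose(3m+1, m)
      have hmain : (3 * m + 3 + 1).choose (m + 1) * ((m + 1) * ((2 * m + 3) * (2 * m + 2))) =
          ((3 * m + 4) * ((3 * m + 3) * (3 * m + 2))) * (3 * m + 1).choose m := by
        calc (3 * m + 3 + 1).choose (m + 1) * ((m + 1) * ((2 * m + 3) * (2 * m + 2)))
            = ((3 * m + 3 + 1).choose (m + 1) * (m + 1)) * ((2 * m + 3) * (2 * m + 2)) := by ring
          _ = ((3 * m + 3 + 1) * (3 * m + 3).choose m) * ((2 * m + 3) * (2 * m + 2)) := by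
              rw [h3]
          _ = (3 * m + 4) * (((3 * m + 3).choose m * (2 * m + 3)) * (2 * m + 2)) := by ring
          _ = (3 * m + 4) * (((3 * m + 2).choose m * (3 * m + 2 + 1)) * (2 * m + 2)) := by
              rw [h2]
          _ = (3 * m + 4) * ((3 * m + 3) * ((3 * m + 2).choose m * (2 * m + 2))) := by ring
          _ = (3 * m + 4) * ((3 * m + 3) * ((3 * m + 1).choose m * (3 * m + 1 + 1))) := by
              rw [h1]
          _ = ((3 * m + 4) * ((3 * m + 3) * (3 * m + 2))) * (3 * m + 1).choose m := by ring
      have hpoly : (3 * m + 4) * ((3 * m + 3) * (3 * m + 2)) ≤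
          7 * ((m + 1) * ((2 * m + 3) * (2 * m + 2))) := by nlinarith [sq_nonneg m]
      have hfinal : (3 * m + 3 + 1).choose (m + 1) * ((m + 1) * ((2 * m + 3) * (2 * m + 2))) ≤
          (7 * (3 * m + 1).choose m) * ((m + 1) * ((2 * m + 3) * (2 * m + 2))) := by
        rw [hmain]
        calc ((3 * m + 4) * ((3 * m + 3) * (3 * m + 2))) * (3 * m + 1).choose m
            ≤ (7 * ((m + 1) * ((2 * m + 3) * (2 * m + 2)))) * (3 * m + 1).choose m :=
              Nat.mul_le_mul_right _ hpoly
          _ = (7 * (3 * m + 1).choose m) * ((m + 1) * ((2 * m + 3) * (2 * m + 2))) := by ring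
      have hpos : 0 < (m + 1) * ((2 * m + 3) * (2 * m + 2)) := by positivity
      have hres : (3 * m + 3 + 1).choose (m + 1) ≤ 7 * (3 * m + 1).choose m :=
        Nat.le_of_mul_le_mul_right hfinal hpos
      have he : 3 * (m + 1) + 1 = 3 * m + 3 + 1 := by omega
      rw [he]
      exact hres
    calc (3 * (m + 1) + 1).choose (m + 1) ≤ 7 * (3 * m + 1).choose m := key
      _ ≤ 7 * 7 ^ m := Nat.mul_le_mul_left _ ih
      _ = 7 ^ (m + 1) := by ring

theorem stmt_10 (m : ℕ) (hm : 5 ≤ m) (a : ℕ → ℕ) (b : ℕ)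
    (ha1 : a 1 = 1)
    (hmono : ∀ i, 2 ≤ i → i ≤ m → a (i - 1) < a i)
    (h8 : ∀ i, 2 ≤ i → i ≤ m → 8 * a (i - 1) ≤ a i)
    (hb : a m + 7 * a m ≤ b)
    (hsym : ∀ i, 1 ≤ i → i ≤ m - 1 → a (m + i) = b + a m - a (m - i))
    (h2m : a (2 * m) = b + a m) :
    ∃ n ≤ (2 * m + 1) * (b + a m),
      ¬ CanRep (insert b ((Finset.Icc 1 (2 * m)).image a)) (2 * m + 1) n := by
  -- monotonicity: a i ≤ a j for 1 ≤ i ≤ j ≤ m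
  have hmono' : ∀ i j, 1 ≤ i → i ≤ j → j ≤ m → a i ≤ a j := by
    intro i j h1 h2 h3
    induction j with
    | zero => omega
    | succ j ihj =>
      rcases Nat.lt_or_ge i (j + 1) with hij | hij
      · have h4 : a i ≤ a j := ihj (by omega) (by omega)
        have h5 : a j < a (j + 1) := by
          have := hmono (j + 1) (by omega) h3
          simpa using this
        omega
      · have : i = j + 1 := by omega
        subst this; rfl
  -- growth: 8^(i-1) ≤ a i
  have hgrow : ∀ i, 1 ≤ i → i ≤ m → 8 ^ (i - 1) ≤ a i := by
    intro i h1 h2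
    induction i with
    | zero => omega
    | succ i ihi =>
      rcases Nat.eq_or_lt_of_le h1 with h | h
      · simp [← h, ha1]
      · have hi1 : 1 ≤ i := by omega
        have := ihi hi1 (by omega)
        have h8' := h8 (i + 1) (by omega) h2
        simp only [Nat.add_sub_cancel] at h8'
        calc 8 ^ (i + 1 - 1) = 8 * 8 ^ (i - 1) := by
              rw [Nat.add_sub_cancel]
              conv_lhs => rw [show i = (i - 1) + 1 by omega]
              ring
          _ ≤ 8 * a i := by omega
          _ ≤ a (i + 1) := h8'
  have ham : 8 ^ (m - 1) ≤ a m := hgrow m (by omega) le_rfl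
  have hb8 : 8 * a m ≤ b := by omega
  -- find a bad n < 8 * a m
  set T := RS a m (2 * m + 1) with hT
  have hcardT : T.card < 8 * a m := by
    have h1 : T.card ≤ (m + (2 * m + 1)).choose m := card_RS a (2 * m + 1) m
    have h2 : (m + (2 * m + 1)).choose m = (3 * m + 1).choose m := by congr 1; omega
    have h3 : (3 * m + 1).choose m ≤ 7 ^ m := choose_le_seven_pow m
    have h4 : 7 ^ m < 8 ^ m := Nat.pow_lt_pow_left (by norm_num) (by omega)
    have h5 : 8 ^ m ≤ 8 * a m := by
      calc 8 ^ m = 8 * 8 ^ (m - 1) := by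
            conv_lhs => rw [show m = (m - 1) + 1 by omega]
            ring
        _ ≤ 8 * a m := by omega
    omega
  have hex : ∃ n ∈ Finset.range (8 * a m), n ∉ T := by
    by_contra hcon
    push_neg at hcon
    have hsub : Finset.range (8 * a m) ⊆ T := fun n hn => hcon n hn
    have := Finset.card_le_card hsub
    rw [Finset.card_range] at this
    omega
  obtain ⟨n, hnr, hnT⟩ := hex
  rw [Finset.mem_range] at hnr
  have hnb : n < b := by omega
  refine ⟨n, ?_, ?_⟩
  · have : b ≤ (2 * m + 1) * (b + a m) := by nlinarith
    omega
  · rintro ⟨l, hmem, hcard, hsum⟩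
    apply hnT
    rw [hT, ← hsum]
    apply mem_RS
    · intro x hx
      have hxn : x ≤ n := by
        rw [← hsum]
        exact Multiset.single_le_sum (fun y _ => Nat.zero_le y) x hx
      have hxb : x < b := by omega
      have := hmem x hx
      rw [Finset.mem_insert] at this
      rcases this with h | h
      · omega
      · rw [Finset.mem_image] at h
        obtain ⟨i, hi, hxa⟩ := h
        rw [Finset.mem_Icc] at hi
        rcases le_or_gt i m with him | him
        · exact ⟨i, hi.1, him, hxa.symm⟩
        · exfalso
          rcases Nat.eq_or_lt_of_le hi.2 with h2 | h2
          · rw [h2, h2m] at hxa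
            omega
          · -- m < i < 2m : i = m + (i - m) with 1 ≤ i - m ≤ m - 1
            have hi' : a (m + (i - m)) = b + a m - a (m - (i - m)) :=
              hsym (i - m) (by omega) (by omega)
            rw [show m + (i - m) = i by omega] at hi'
            have hle : a (m - (i - m)) ≤ a m := hmono' (m - (i - m)) m (by omega) (by omega) le_rfl
            rw [hi'] at hxa
            omega
    · exact hcard
end
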